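/- Suppose q(z) = q_0 - 2Σ_{j=1}^N 𝒫(z - z_j) with 𝒫(z) = 1/z² (the rational case) and pairwise distinct z_1,…,z_N ∈ ℂ satisfying the CM locus conditions Σ_{j≠k} (z_k - z_j)^{-3} = 0 for all k. Define f_1 = c_1 + q/2. Then f_1(z) = d_1 + Σ_{k=1}^N a_{1,k} 𝒫(z - z_k) with d_1 = c_1 + q_0/2 and a_{1,k} = -1, and the function f_2 determined (up to a constant d_2) by the KdV recursion f_2' = (1/4)f_1''' + q f_1' + (1/2)q' f_1 is again of the form f_2(z) = d_2 + Σ_{k=1}^N a_{2,k} 𝒫(z - z_k) with a_{2,k} = -q_0 - d_1 + 3 Σ_{ℓ≠k} 𝒫(z_k - z_ℓ). -/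

import Mathlib

open Finset


private lemma pf_div (x y d : ℂ) (hx : x ≠ 0) (hd : d ≠ 0) (hy : y ≠ 0) (h : y = x + d) :
    1 / (x ^ 3 * y ^ 2) =
      1 / (d ^ 2 * x ^ 3) - 2 / (d ^ 3 * x ^ 2) + 3 / (d ^ 4 * x)
        - 1 / (d ^ 3 * y ^ 2) - 3 / (d ^ 4 * y) := by
  have hM : x ^ 3 * y ^ 2 * d ^ 4 ≠ 0 :=
    mul_ne_zero (mul_ne_zero (pow_ne_zero _ hx) (pow_ne_zero _ hy)) (pow_ne_zero _ hd)
  have eq1 : 1 / (x ^ 3 * y ^ 2)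
      = (y ^ 2 * d ^ 2 - 2 * x * d * y ^ 2 + 3 * x ^ 2 * y ^ 2 - x ^ 3 * d - 3 * x ^ 3 * y)
        / (x ^ 3 * y ^ 2 * d ^ 4) := by
    rw [div_eq_div_iff (mul_ne_zero (pow_ne_zero _ hx) (pow_ne_zero _ hy)) hM]
    subst h; ring
  rw [eq1, sub_div, sub_div, add_div, sub_div,
    show y ^ 2 * d ^ 2 / (x ^ 3 * y ^ 2 * d ^ 4) = 1 / (d ^ 2 * x ^ 3) by
      rw [div_eq_div_iff hM (mul_ne_zero (pow_ne_zero _ hd) (pow_ne_zero _ hx))]; ring,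
    show 2 * x * d * y ^ 2 / (x ^ 3 * y ^ 2 * d ^ 4) = 2 / (d ^ 3 * x ^ 2) by
      rw [div_eq_div_iff hM (mul_ne_zero (pow_ne_zero _ hd) (pow_ne_zero _ hx))]; ring,
    show 3 * x ^ 2 * y ^ 2 / (x ^ 3 * y ^ 2 * d ^ 4) = 3 / (d ^ 4 * x) by
      rw [div_eq_div_iff hM (mul_ne_zero (pow_ne_zero _ hd) hx)]; ring,
    show x ^ 3 * d / (x ^ 3 * y ^ 2 * d ^ 4) = 1 / (d ^ 3 * y ^ 2) by
      rw [div_eq_div_iff hM (mul_ne_zero (pow_ne_zero _ hd) (pow_ne_zero _ hy))]; ring,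
    show 3 * x ^ 3 * y / (x ^ 3 * y ^ 2 * d ^ 4) = 3 / (d ^ 4 * y) by
      rw [div_eq_div_iff hM (mul_ne_zero (pow_ne_zero _ hd) hy)]; ring]

private lemma pf_inv (x y d : ℂ) (hx : x ≠ 0) (hd : d ≠ 0) (hy : y ≠ 0) (h : y = x + d) :
    (x ^ 3)⁻¹ * (y ^ 2)⁻¹ =
      (d ^ 2)⁻¹ * (x ^ 3)⁻¹
        + ((-2) * (d ^ 3)⁻¹ * (x ^ 2)⁻¹ + (-1) * (d ^ 3)⁻¹ * (y ^ 2)⁻¹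
        + (3 * (d ^ 4)⁻¹ * x⁻¹ + (-3) * (d ^ 4)⁻¹ * y⁻¹)) := by
  have hh := pf_div x y d hx hd hy h
  simp only [one_div, mul_inv] at hh
  linear_combination hh
open Finset

private lemma hasDerivAt_invPow (n : ℕ) (a w : ℂ) (hw : w ≠ a) :
    HasDerivAt (fun u : ℂ => ((u - a) ^ n)⁻¹) (-(n : ℂ) * ((w - a) ^ (n + 1))⁻¹) w := by
  have h1 : HasDerivAt (fun u : ℂ => u - a) 1 w := (hasDerivAt_id w).sub_const a
  have h2 := hasDerivAt_zpow (-(n : ℤ)) (w - a) (Or.inl (sub_ne_zero.2 hw))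
  have h3 : HasDerivAt (fun u : ℂ => ((u - a) ^ n)⁻¹)
      (((-(n : ℤ) : ℤ) : ℂ) * (w - a) ^ (-(n : ℤ) - 1) * 1) w := by
    have hfun : (fun u : ℂ => ((u - a) ^ n)⁻¹)
        = (fun x : ℂ => x ^ (-(n : ℤ))) ∘ (fun u : ℂ => u - a) := by
      funext u; simp [zpow_neg]
    rw [hfun]
    exact h2.comp w h1
  rw [mul_one] at h3
  convert h3 using 1
  rw [show -(n : ℤ) - 1 = -((n + 1 : ℕ) : ℤ) by push_cast; ring, zpow_neg, zpow_natCast]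
  push_cast
  ring

private lemma hasDerivAt_sumInv {N : ℕ} (z : Fin N → ℂ) (c : Fin N → ℂ) (n : ℕ) (w : ℂ)
    (hw : ∀ j, w ≠ z j) :
    HasDerivAt (fun u : ℂ => ∑ j, c j * ((u - z j) ^ n)⁻¹)
      (∑ j, (c j * -(n : ℂ)) * ((w - z j) ^ (n + 1))⁻¹) w := by
  have h := HasDerivAt.fun_sum (u := (univ : Finset (Fin N)))
    (A := fun j u => c j * ((u - z j) ^ n)⁻¹)
    (fun j _ => (hasDerivAt_invPow n (z j) w (hw j)).const_mul (c j))
  convert h using 1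
  all_goals first | rfl | exact Finset.sum_congr rfl fun j _ => by ring

private lemma deriv_sumInv {N : ℕ} (z : Fin N → ℂ) (c e : Fin N → ℂ) (n m : ℕ)
    (hm : m = n + 1) (u : ℂ)
    (hu : ∀ j, u ≠ z j) (he : ∀ j, e j = c j * -(n : ℂ)) :
    deriv (fun v : ℂ => ∑ j, c j * ((v - z j) ^ n)⁻¹) u
      = ∑ j, e j * ((u - z j) ^ m)⁻¹ := by
  subst hm
  rw [(hasDerivAt_sumInv z c n u hu).deriv]
  exact Finset.sum_congr rfl fun j _ => by rw [he]

private lemma deriv_const_add_sumInv {N : ℕ} (z : Fin N → ℂ) (c e : Fin N → ℂ) (n m : ℕ)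
    (hm : m = n + 1) (b : ℂ) (u : ℂ)
    (hu : ∀ j, u ≠ z j) (he : ∀ j, e j = c j * -(n : ℂ)) :
    deriv (fun v : ℂ => b + ∑ j, c j * ((v - z j) ^ n)⁻¹) u
      = ∑ j, e j * ((u - z j) ^ m)⁻¹ := by
  subst hm
  rw [((hasDerivAt_const u b).fun_add (hasDerivAt_sumInv z c n u hu)).deriv, zero_add]
  exact Finset.sum_congr rfl fun j _ => by rw [he]

private lemma sum_offdiag_comm {N : ℕ} (g : Fin N → Fin N → ℂ) :
    ∑ k, ∑ ℓ ∈ univ \ {k}, g k ℓ = ∑ ℓ, ∑ k ∈ univ \ {ℓ}, g k ℓ :=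
  Finset.sum_comm' (by intro x y; simp [ne_comm])

private lemma sum_offdiag_antisymm {N : ℕ} (g : Fin N → Fin N → ℂ)
    (hg : ∀ k ℓ, g k ℓ = -g ℓ k) :
    ∑ k, ∑ ℓ ∈ univ \ {k}, g k ℓ = 0 := by
  have h : (∑ k, ∑ ℓ ∈ univ \ {k}, g k ℓ) = -(∑ k, ∑ ℓ ∈ univ \ {k}, g k ℓ) := by
    calc (∑ k, ∑ ℓ ∈ univ \ {k}, g k ℓ) = ∑ ℓ, ∑ k ∈ univ \ {ℓ}, g k ℓ := sum_offdiag_comm g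
    _ = ∑ ℓ, ∑ k ∈ univ \ {ℓ}, -g ℓ k :=
        Finset.sum_congr rfl fun ℓ _ => Finset.sum_congr rfl fun k _ => hg k ℓ
    _ = -(∑ ℓ, ∑ k ∈ univ \ {ℓ}, g ℓ k) := by simp
  exact CharZero.eq_neg_self_iff.mp h


/-- In the rational case `𝒫(z) = 1/z²`, let `q(z) = q₀ - 2 Σ_j 𝒫(z - z_j)` with
pairwise distinct `z_j` satisfying the CM locus conditions
`Σ_{j≠k} (z_k - z_j)⁻³ = 0`.  With `f₁ = c₁ + q/2` one has
`f₁ = d₁ + Σ_k a_{1,k} 𝒫(z - z_k)` with `d₁ = c₁ + q₀/2`, `a_{1,k} = -1`, and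
the next KdV recursion coefficient `f₂` (determined up to a constant `d₂` by
`f₂' = (1/4) f₁''' + q f₁' + (1/2) q' f₁`) is again of the form
`d₂ + Σ_k a_{2,k} 𝒫(z - z_k)` with
`a_{2,k} = -q₀ - d₁ + 3 Σ_{ℓ≠k} 𝒫(z_k - z_ℓ)`. -/
theorem kdv_recursion_f2_rational (N : ℕ) (z : Fin N → ℂ) (hz : Function.Injective z)
    (q₀ c₁ : ℂ)
    (hCM : ∀ k : Fin N, ∑ j ∈ Finset.univ \ {k}, ((z k - z j) ^ 3)⁻¹ = 0)
    (q f₁ : ℂ → ℂ)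
    (hq : ∀ w : ℂ, q w = q₀ - 2 * ∑ j : Fin N, ((w - z j) ^ 2)⁻¹)
    (hf₁ : ∀ w : ℂ, f₁ w = c₁ + q w / 2)
    (d₁ : ℂ) (hd₁ : d₁ = c₁ + q₀ / 2)
    (a₂ : Fin N → ℂ)
    (ha₂ : ∀ k : Fin N,
      a₂ k = -q₀ - d₁ + 3 * ∑ ℓ ∈ Finset.univ \ {k}, ((z k - z ℓ) ^ 2)⁻¹) :
    -- f₁ has the asserted form
    (∀ w : ℂ, f₁ w = d₁ + ∑ k : Fin N, (-1 : ℂ) * ((w - z k) ^ 2)⁻¹) ∧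
    -- f₂ := d₂ + Σ_k a_{2,k} 𝒫(· - z_k) satisfies the KdV recursion away from the poles
    (∀ w : ℂ, w ∉ Set.range z →
      deriv (fun u => ∑ k : Fin N, a₂ k * ((u - z k) ^ 2)⁻¹) w =
        (1 / 4) * deriv (fun u => deriv (fun u' => deriv f₁ u') u) w
          + q w * deriv f₁ w + (1 / 2) * deriv q w * f₁ w) := by
  have hpart1 : ∀ w : ℂ, f₁ w = d₁ + ∑ k : Fin N, (-1 : ℂ) * ((w - z k) ^ 2)⁻¹ := by
    intro w
    have hs : ∑ k : Fin N, (-1 : ℂ) * ((w - z k) ^ 2)⁻¹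
        = -∑ k : Fin N, ((w - z k) ^ 2)⁻¹ := by
      rw [← Finset.sum_neg_distrib]
      exact Finset.sum_congr rfl fun k _ => by ring
    rw [hf₁ w, hq w, hd₁, hs]; ring
  refine ⟨hpart1, ?_⟩
  intro w hw
  have hw' : ∀ j, w ≠ z j := fun j h => hw ⟨j, h.symm⟩
  -- openness of the complement of the poles
  have hopen : IsOpen {u : ℂ | ∀ j, u ≠ z j} := by
    have : {u : ℂ | ∀ j, u ≠ z j} = (Set.range z)ᶜ := by
      ext u; simp [Set.mem_range, eq_comm]
    rw [this]
    exact (Set.finite_range z).isClosed.isOpen_compl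
  have hmemnhds : ∀ u : ℂ, (∀ j, u ≠ z j) → {u : ℂ | ∀ j, u ≠ z j} ∈ nhds u :=
    fun u hu => hopen.mem_nhds hu
  have hf : f₁ = fun v => d₁ + ∑ k : Fin N, (-1 : ℂ) * ((v - z k) ^ 2)⁻¹ := funext hpart1
  have hqfun : q = fun v => q₀ + ∑ j : Fin N, (-2 : ℂ) * ((v - z j) ^ 2)⁻¹ := by
    funext v
    have hs : ∑ j : Fin N, (-2 : ℂ) * ((v - z j) ^ 2)⁻¹
        = -(2 * ∑ j : Fin N, ((v - z j) ^ 2)⁻¹) := by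
      rw [Finset.mul_sum, ← Finset.sum_neg_distrib]
      exact Finset.sum_congr rfl fun j _ => by ring
    rw [hq v, hs]; ring
  -- first derivative of f₁
  have hderiv1 : ∀ u : ℂ, (∀ j, u ≠ z j) →
      deriv f₁ u = ∑ j : Fin N, (2 : ℂ) * ((u - z j) ^ 3)⁻¹ := by
    intro u hu
    rw [hf]
    exact deriv_const_add_sumInv z (fun _ => (-1 : ℂ)) (fun _ => (2 : ℂ)) 2 3 rfl d₁ u hu
      (fun j => by push_cast; ring)
  -- second derivative of f₁
  have hderiv2 : ∀ u : ℂ, (∀ j, u ≠ z j) →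
      deriv (deriv f₁) u = ∑ j : Fin N, (-6 : ℂ) * ((u - z j) ^ 4)⁻¹ := by
    intro u hu
    have hee : deriv f₁ =ᶠ[nhds u] (fun v => ∑ j : Fin N, (2 : ℂ) * ((v - z j) ^ 3)⁻¹) :=
      Filter.eventually_of_mem (hmemnhds u hu) (fun v hv => hderiv1 v hv)
    rw [hee.deriv_eq]
    exact deriv_sumInv z _ _ 3 4 rfl u hu (fun j => by push_cast; ring)
  -- third derivative of f₁ at w
  have hderiv3 : deriv (fun u => deriv (fun u' => deriv f₁ u') u) w
      = ∑ j : Fin N, (24 : ℂ) * ((w - z j) ^ 5)⁻¹ := by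
    have hee : (fun u => deriv (fun u' => deriv f₁ u') u)
        =ᶠ[nhds w] (fun v => ∑ j : Fin N, (-6 : ℂ) * ((v - z j) ^ 4)⁻¹) :=
      Filter.eventually_of_mem (hmemnhds w hw') (fun v hv => hderiv2 v hv)
    rw [hee.deriv_eq]
    exact deriv_sumInv z _ _ 4 5 rfl w hw' (fun j => by push_cast; ring)
  -- derivative of q at w
  have hdq : deriv q w = ∑ j : Fin N, (4 : ℂ) * ((w - z j) ^ 3)⁻¹ := by
    rw [hqfun]
    exact deriv_const_add_sumInv z (fun _ => (-2 : ℂ)) (fun _ => (4 : ℂ)) 2 3 rfl q₀ w hw'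
      (fun j => by push_cast; ring)
  -- derivative of the f₂ sum at w
  have hLHS : deriv (fun u => ∑ k : Fin N, a₂ k * ((u - z k) ^ 2)⁻¹) w
      = ∑ k : Fin N, (-2 * a₂ k) * ((w - z k) ^ 3)⁻¹ :=
    deriv_sumInv z a₂ (fun k => -2 * a₂ k) 2 3 rfl w hw' (fun k => by push_cast; ring)
  -- the main combinatorial identity
  have hM : (∑ k : Fin N, ∑ ℓ ∈ univ \ {k}, ((w - z k) ^ 3)⁻¹ * ((w - z ℓ) ^ 2)⁻¹)
      = ∑ k : Fin N, ∑ ℓ ∈ univ \ {k}, ((z k - z ℓ) ^ 2)⁻¹ * ((w - z k) ^ 3)⁻¹ := by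
    have hB0 : (∑ k : Fin N, ∑ ℓ ∈ univ \ {k},
        (-2 : ℂ) * ((z k - z ℓ) ^ 3)⁻¹ * ((w - z k) ^ 2)⁻¹) = 0 := by
      refine Finset.sum_eq_zero fun k _ => ?_
      calc ∑ ℓ ∈ univ \ {k}, (-2 : ℂ) * ((z k - z ℓ) ^ 3)⁻¹ * ((w - z k) ^ 2)⁻¹
          = (∑ ℓ ∈ univ \ {k}, ((z k - z ℓ) ^ 3)⁻¹) * ((-2) * ((w - z k) ^ 2)⁻¹) := by
            rw [Finset.sum_mul]; exact Finset.sum_congr rfl fun ℓ _ => by ring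
        _ = 0 := by rw [hCM k, zero_mul]
    have hD0 : (∑ k : Fin N, ∑ ℓ ∈ univ \ {k},
        (-1 : ℂ) * ((z k - z ℓ) ^ 3)⁻¹ * ((w - z ℓ) ^ 2)⁻¹) = 0 := by
      rw [sum_offdiag_comm]
      refine Finset.sum_eq_zero fun ℓ _ => ?_
      calc ∑ k ∈ univ \ {ℓ}, (-1 : ℂ) * ((z k - z ℓ) ^ 3)⁻¹ * ((w - z ℓ) ^ 2)⁻¹
          = (∑ k ∈ univ \ {ℓ}, ((z ℓ - z k) ^ 3)⁻¹) * ((w - z ℓ) ^ 2)⁻¹ := by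
            rw [Finset.sum_mul]
            refine Finset.sum_congr rfl fun k _ => ?_
            rw [show (z k - z ℓ) ^ 3 = -((z ℓ - z k) ^ 3) by ring, inv_neg]; ring
        _ = 0 := by rw [hCM ℓ, zero_mul]
    have hG0 : (∑ k : Fin N, ∑ ℓ ∈ univ \ {k},
        ((3 : ℂ) * ((z k - z ℓ) ^ 4)⁻¹ * (w - z k)⁻¹
          + (-3 : ℂ) * ((z k - z ℓ) ^ 4)⁻¹ * (w - z ℓ)⁻¹)) = 0 := by
      refine sum_offdiag_antisymm _ fun k ℓ => ?_
      rw [show (z ℓ - z k) ^ 4 = (z k - z ℓ) ^ 4 by ring]; ring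
    calc (∑ k : Fin N, ∑ ℓ ∈ univ \ {k}, ((w - z k) ^ 3)⁻¹ * ((w - z ℓ) ^ 2)⁻¹)
        = ∑ k : Fin N, ∑ ℓ ∈ univ \ {k},
            (((z k - z ℓ) ^ 2)⁻¹ * ((w - z k) ^ 3)⁻¹
              + ((-2 : ℂ) * ((z k - z ℓ) ^ 3)⁻¹ * ((w - z k) ^ 2)⁻¹
                + (-1 : ℂ) * ((z k - z ℓ) ^ 3)⁻¹ * ((w - z ℓ) ^ 2)⁻¹
              + ((3 : ℂ) * ((z k - z ℓ) ^ 4)⁻¹ * (w - z k)⁻¹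
                + (-3 : ℂ) * ((z k - z ℓ) ^ 4)⁻¹ * (w - z ℓ)⁻¹))) := by
          refine Finset.sum_congr rfl fun k _ => Finset.sum_congr rfl fun ℓ hℓ => ?_
          have hkl : k ≠ ℓ := fun h => (Finset.mem_sdiff.mp hℓ).2 (Finset.mem_singleton.mpr h.symm)
          exact pf_inv (w - z k) (w - z ℓ) (z k - z ℓ) (sub_ne_zero.2 (hw' k))
            (sub_ne_zero.2 fun he => hkl (hz he)) (sub_ne_zero.2 (hw' ℓ)) (by ring)
      _ = ∑ k : Fin N, ∑ ℓ ∈ univ \ {k}, ((z k - z ℓ) ^ 2)⁻¹ * ((w - z k) ^ 3)⁻¹ := by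
          simp only [Finset.sum_add_distrib]
          rw [hB0, hD0]
          have hCE : (∑ k : Fin N, ∑ ℓ ∈ univ \ {k},
              (3 : ℂ) * ((z k - z ℓ) ^ 4)⁻¹ * (w - z k)⁻¹)
              + (∑ k : Fin N, ∑ ℓ ∈ univ \ {k},
              (-3 : ℂ) * ((z k - z ℓ) ^ 4)⁻¹ * (w - z ℓ)⁻¹) = 0 := by
            simp only [← Finset.sum_add_distrib]
            exact hG0
          rw [hCE]; ring
  -- key identity: Σ_k S_k 𝒫'-coefficient
  have hK : (∑ k : Fin N, (∑ ℓ ∈ univ \ {k}, ((z k - z ℓ) ^ 2)⁻¹) * ((w - z k) ^ 3)⁻¹)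
      = (∑ j : Fin N, ((w - z j) ^ 2)⁻¹) * (∑ j : Fin N, ((w - z j) ^ 3)⁻¹)
        - ∑ j : Fin N, ((w - z j) ^ 5)⁻¹ := by
    have hprod : (∑ j : Fin N, ((w - z j) ^ 2)⁻¹) * (∑ j : Fin N, ((w - z j) ^ 3)⁻¹)
        = (∑ j : Fin N, ((w - z j) ^ 5)⁻¹)
          + ∑ k : Fin N, ∑ ℓ ∈ univ \ {k}, ((w - z k) ^ 3)⁻¹ * ((w - z ℓ) ^ 2)⁻¹ := by
      rw [mul_comm, Finset.sum_mul_sum]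
      rw [← Finset.sum_add_distrib]
      refine Finset.sum_congr rfl fun k _ => ?_
      rw [Finset.sum_eq_sum_sdiff_singleton_add (Finset.mem_univ k)
        (fun ℓ => ((w - z k) ^ 3)⁻¹ * ((w - z ℓ) ^ 2)⁻¹)]
      have h5 : ((w - z k) ^ 3)⁻¹ * ((w - z k) ^ 2)⁻¹ = ((w - z k) ^ 5)⁻¹ := by
        rw [← mul_inv, ← pow_add]
      rw [h5]; ring
    rw [hprod]
    have : (∑ k : Fin N, (∑ ℓ ∈ univ \ {k}, ((z k - z ℓ) ^ 2)⁻¹) * ((w - z k) ^ 3)⁻¹)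
        = ∑ k : Fin N, ∑ ℓ ∈ univ \ {k}, ((z k - z ℓ) ^ 2)⁻¹ * ((w - z k) ^ 3)⁻¹ :=
      Finset.sum_congr rfl fun k _ => Finset.sum_mul _ _ _
    rw [this, ← hM]; ring
  -- put everything together
  rw [hLHS, hderiv3, hderiv1 w hw', hdq, hq w, hpart1 w]
  have e24 : ∑ j : Fin N, (24 : ℂ) * ((w - z j) ^ 5)⁻¹
      = 24 * ∑ j : Fin N, ((w - z j) ^ 5)⁻¹ := by rw [Finset.mul_sum]
  have e2 : ∑ j : Fin N, (2 : ℂ) * ((w - z j) ^ 3)⁻¹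
      = 2 * ∑ j : Fin N, ((w - z j) ^ 3)⁻¹ := by rw [Finset.mul_sum]
  have e4 : ∑ j : Fin N, (4 : ℂ) * ((w - z j) ^ 3)⁻¹
      = 4 * ∑ j : Fin N, ((w - z j) ^ 3)⁻¹ := by rw [Finset.mul_sum]
  have eneg : ∑ k : Fin N, (-1 : ℂ) * ((w - z k) ^ 2)⁻¹
      = -∑ k : Fin N, ((w - z k) ^ 2)⁻¹ := by
    rw [← Finset.sum_neg_distrib]
    exact Finset.sum_congr rfl fun k _ => by ring
  have hL : ∑ k : Fin N, (-2 * a₂ k) * ((w - z k) ^ 3)⁻¹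
      = (2 * q₀ + 2 * d₁) * (∑ k : Fin N, ((w - z k) ^ 3)⁻¹)
        - 6 * ∑ k : Fin N, (∑ ℓ ∈ univ \ {k}, ((z k - z ℓ) ^ 2)⁻¹) * ((w - z k) ^ 3)⁻¹ := by
    rw [Finset.mul_sum, Finset.mul_sum, ← Finset.sum_sub_distrib]
    exact Finset.sum_congr rfl fun k _ => by rw [ha₂ k]; ring
  rw [hL, hK, e24, e2, e4, eneg]
  ring
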